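/- Let D be a connected diagram with |D| vertices and let 𝓕 be a maximal nested set on D. Then: (a) the cardinality of 𝓕 equals |D|; and (b) for every B ∈ 𝓕, the union of the maximal elements of 𝓕 properly contained in B covers all vertices of B except exactly one vertex α^B_𝓕, and these maximal elements are precisely the connected components of B minus the vertex α^B_𝓕. -/

import Mathlib

namespace Stmt3

variable {V : Type*} [Fintype V] [DecidableEq V] (G : SimpleGraph V)

/-- A (nonempty) connected subdiagram, i.e. a full subgraph which is
connected, identified with its vertex set. -/
def IsConnSub (B : Finset V) : Prop :=
  B.Nonempty ∧ (G.induce (B : Set V)).Connected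

/-- Orthogonality: no vertices equal or adjacent. -/
def Orth (B₁ B₂ : Finset V) : Prop :=
  ∀ a ∈ B₁, ∀ b ∈ B₂, a ≠ b ∧ ¬ G.Adj a b

/-- Compatibility: one contains the other, or they are orthogonal. -/
def Compat (B₁ B₂ : Finset V) : Prop :=
  B₁ ⊆ B₂ ∨ B₂ ⊆ B₁ ∨ Orth G B₁ B₂

/-- A nested set on the connected diagram `G`: pairwise compatible connected
subdiagrams containing the whole diagram. -/
def IsNested (𝓕 : Finset (Finset V)) : Prop :=
  (∀ B ∈ 𝓕, IsConnSub G B) ∧ (∀ B₁ ∈ 𝓕, ∀ B₂ ∈ 𝓕, Compat G B₁ B₂) ∧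
    Finset.univ ∈ 𝓕

/-- A maximal nested set. -/
def IsMaxNested (𝓕 : Finset (Finset V)) : Prop :=
  IsNested G 𝓕 ∧ ∀ 𝓖, IsNested G 𝓖 → 𝓕 ⊆ 𝓖 → 𝓖 = 𝓕

/-- The maximal elements of `𝓕` properly contained in `B`. -/
def MaxBelow (𝓕 : Finset (Finset V)) (B : Finset V) : Set (Finset V) :=
  {C | C ∈ 𝓕 ∧ C ⊂ B ∧ ∀ C' ∈ 𝓕, C ⊆ C' → C' ⊂ B → C' = C}

/-- Reachability within a vertex set `S`. -/
def Reach (S : Finset V) (a b : V) : Prop :=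
  ∃ w : G.Walk a b, ∀ v ∈ w.support, v ∈ S

variable {G}

lemma Orth.symm {B₁ B₂ : Finset V} (h : Orth G B₁ B₂) : Orth G B₂ B₁ :=
  fun a ha b hb => ⟨(h b hb a ha).1.symm, fun hadj => (h b hb a ha).2 hadj.symm⟩

lemma Compat.symm {B₁ B₂ : Finset V} (h : Compat G B₁ B₂) : Compat G B₂ B₁ := by
  rcases h with h | h | h
  · exact Or.inr (Or.inl h)
  · exact Or.inl h
  · exact Or.inr (Or.inr h.symm)

namespace Reach

lemma refl {S : Finset V} {a : V} (ha : a ∈ S) : Reach G S a a :=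
  ⟨SimpleGraph.Walk.nil, by simp [ha]⟩

lemma symm {S : Finset V} {a b : V} (h : Reach G S a b) : Reach G S b a := by
  obtain ⟨w, hw⟩ := h
  exact ⟨w.reverse, fun v hv => hw v (by simpa [SimpleGraph.Walk.support_reverse] using hv)⟩

lemma trans {S : Finset V} {a b c : V} (h : Reach G S a b) (h' : Reach G S b c) :
    Reach G S a c := by
  obtain ⟨w, hw⟩ := h
  obtain ⟨w', hw'⟩ := h'
  refine ⟨w.append w', fun v hv => ?_⟩
  rcases (SimpleGraph.Walk.mem_support_append_iff _ _).1 hv with h | h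
  · exact hw v h
  · exact hw' v h

lemma mono {S T : Finset V} (hST : S ⊆ T) {a b : V} (h : Reach G S a b) : Reach G T a b := by
  obtain ⟨w, hw⟩ := h
  exact ⟨w, fun v hv => hST (hw v hv)⟩

lemma mem_left {S : Finset V} {a b : V} (h : Reach G S a b) : a ∈ S := by
  obtain ⟨w, hw⟩ := h
  exact hw a w.start_mem_support

lemma mem_right {S : Finset V} {a b : V} (h : Reach G S a b) : b ∈ S := by
  obtain ⟨w, hw⟩ := h
  exact hw b w.end_mem_support

lemma adj {S : Finset V} {a b : V} (ha : a ∈ S) (hb : b ∈ S) (h : G.Adj a b) :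
    Reach G S a b :=
  ⟨SimpleGraph.Walk.cons h SimpleGraph.Walk.nil, by simp [ha, hb]⟩

/-- Any intermediate vertex of a witnessing walk is reachable. -/
lemma of_mem_support {S : Finset V} {a b c : V} (w : G.Walk a b)
    (hw : ∀ v ∈ w.support, v ∈ S) (hc : c ∈ w.support) : Reach G S a c :=
  ⟨w.takeUntil c hc, fun v hv => hw v (SimpleGraph.Walk.support_takeUntil_subset w hc hv)⟩

end Reach

/-- Bridge between induced-subgraph connectivity and `Reach`. -/
lemma isConnSub_iff_reach {B : Finset V} :
    IsConnSub G B ↔ B.Nonempty ∧ ∀ a ∈ B, ∀ b ∈ B, Reach G B a b := by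
  constructor
  · rintro ⟨hne, hconn⟩
    refine ⟨hne, fun a ha b hb => ?_⟩
    obtain ⟨w⟩ := hconn.preconnected ⟨a, by simpa using ha⟩ ⟨b, by simpa using hb⟩
    clear hconn
    -- map walk in induced graph to Reach
    suffices h : ∀ (x y : (B : Set V)) (w : (G.induce (B : Set V)).Walk x y),
        Reach G B x.1 y.1 from h _ _ w
    intro x y w
    induction w with
    | nil => exact Reach.refl (by simpa using x.2)
    | @cons u v z h p ih =>
      exact Reach.trans (Reach.adj (Finset.mem_coe.mp u.2) (Finset.mem_coe.mp v.2) h) ih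
  · rintro ⟨hne, hreach⟩
    obtain ⟨a, ha⟩ := hne
    refine ⟨⟨a, ha⟩, ?_⟩
    rw [SimpleGraph.connected_iff]
    refine ⟨?_, ⟨⟨a, ha⟩⟩⟩
    have key : ∀ (x y : V) (w : G.Walk x y), (∀ v ∈ w.support, v ∈ B) →
        ∀ (hx : x ∈ B) (hy : y ∈ B),
        (G.induce (B : Set V)).Reachable ⟨x, by simpa using hx⟩ ⟨y, by simpa using hy⟩ := by
      intro x y w
      induction w with
      | nil => intro _ hx hy; rfl
      | @cons u v z h p ih =>
        intro hw hx hy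
        have hv : v ∈ B := hw v (by simp)
        have h1 : (G.induce (B : Set V)).Adj ⟨u, by simpa using hx⟩ ⟨v, by simpa using hv⟩ := h
        exact (h1.reachable).trans (ih (fun t ht => hw t (by simp [ht])) hv hy)
    rintro ⟨x, hx⟩ ⟨y, hy⟩
    obtain ⟨w, hw⟩ := hreach x (by simpa using hx) y (by simpa using hy)
    exact key x y w hw (by simpa using hx) (by simpa using hy)


/-- If `A ⊆ B` is nonempty and has no edges to its complement in `B`, and `B` is
connected, then `A = B`. -/
lemma closed_eq {A B : Finset V} (hB : IsConnSub G B) (hAB : A ⊆ B) (hA : A.Nonempty)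
    (hcl : ∀ a ∈ A, ∀ b ∈ B, b ∉ A → ¬ G.Adj a b) : A = B := by
  obtain ⟨a0, ha0⟩ := hA
  have walkstep : ∀ (x y : V) (w : G.Walk x y), (∀ v ∈ w.support, v ∈ B) → x ∈ A → y ∈ A := by
    intro x y w
    induction w with
    | nil => exact fun _ hx => hx
    | @cons u v z h p ih =>
      intro hw hx
      have hv : v ∈ B := hw v (by simp)
      by_cases hvA : v ∈ A
      · exact ih (fun t ht => hw t (by simp [ht])) hvA
      · exact absurd h (hcl u hx v hv hvA)
  refine Finset.Subset.antisymm hAB fun b hb => ?_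
  obtain ⟨w, hw⟩ := (isConnSub_iff_reach.1 hB).2 a0 (hAB ha0) b hb
  exact walkstep a0 b w hw ha0

variable (G) in
/-- The connected component of `v` inside the vertex set `S`, as a `Finset`. -/
noncomputable def compF (S : Finset V) (v : V) : Finset V :=
  @Finset.filter V (fun w => Reach G S v w) (Classical.decPred _) S

lemma mem_compF {S : Finset V} {v w : V} : w ∈ compF G S v ↔ w ∈ S ∧ Reach G S v w := by
  simp [compF, Finset.mem_filter]

lemma compF_subset {S : Finset V} {v : V} : compF G S v ⊆ S := fun x hx => (mem_compF.1 hx).1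

lemma self_mem_compF {S : Finset V} {v : V} (hv : v ∈ S) : v ∈ compF G S v :=
  mem_compF.2 ⟨hv, Reach.refl hv⟩

lemma compF_connSub {S : Finset V} {v : V} (hv : v ∈ S) : IsConnSub G (compF G S v) := by
  rw [isConnSub_iff_reach]
  refine ⟨⟨v, self_mem_compF hv⟩, fun a ha b hb => ?_⟩
  obtain ⟨wa, hwa⟩ := (mem_compF.1 ha).2
  obtain ⟨wb, hwb⟩ := (mem_compF.1 hb).2
  refine ⟨wa.reverse.append wb, fun u hu => ?_⟩
  rcases (SimpleGraph.Walk.mem_support_append_iff _ _).1 hu with h | h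
  · rw [SimpleGraph.Walk.support_reverse, List.mem_reverse] at h
    exact mem_compF.2 ⟨hwa u h, Reach.of_mem_support wa hwa h⟩
  · exact mem_compF.2 ⟨hwb u h, Reach.of_mem_support wb hwb h⟩

/-- A connected subset of `S` is contained in the component of any of its vertices. -/
lemma conn_subset_compF {A S : Finset V} {a : V} (hAS : A ⊆ S) (hA : IsConnSub G A)
    (ha : a ∈ A) : A ⊆ compF G S a := fun b hb =>
  mem_compF.2 ⟨hAS hb, Reach.mono hAS ((isConnSub_iff_reach.1 hA).2 a ha b hb)⟩

lemma compF_eq_of_reach {S : Finset V} {v w : V} (h : Reach G S v w) :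
    compF G S v = compF G S w := by
  ext x
  simp only [mem_compF]
  exact ⟨fun ⟨hx, hr⟩ => ⟨hx, h.symm.trans hr⟩, fun ⟨hx, hr⟩ => ⟨hx, h.trans hr⟩⟩

/-- Two distinct components are orthogonal. -/
lemma compF_orth {S : Finset V} {v w : V} (h : compF G S v ≠ compF G S w) :
    Orth G (compF G S v) (compF G S w) := by
  intro a ha b hb
  have hra := (mem_compF.1 ha).2
  have hrb := (mem_compF.1 hb).2
  constructor
  · rintro rfl
    exact h ((compF_eq_of_reach hra).trans (compF_eq_of_reach hrb).symm)
  · intro hadj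
    have : Reach G S v b := hra.trans (Reach.adj hra.mem_right hrb.mem_right hadj)
    exact h ((compF_eq_of_reach this).trans (compF_eq_of_reach hrb).symm)


section Main

variable {𝓕 : Finset (Finset V)} (h𝓕 : IsMaxNested G 𝓕)
include h𝓕

lemma maxBelow_orth {B C₁ C₂ : Finset V} (h₁ : C₁ ∈ MaxBelow 𝓕 B) (h₂ : C₂ ∈ MaxBelow 𝓕 B)
    (hne : C₁ ≠ C₂) : Orth G C₁ C₂ := by
  rcases h𝓕.1.2.1 C₁ h₁.1 C₂ h₂.1 with h | h | h
  · exact absurd (h₁.2.2 C₂ h₂.1 h h₂.2.1) (Ne.symm hne)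
  · exact absurd (h₂.2.2 C₁ h₁.1 h h₁.2.1) hne
  · exact h

lemma exists_maxBelow_superset {A B : Finset V} (hA : A ∈ 𝓕) (hB : B ∈ 𝓕) (hAB : A ⊂ B) :
    ∃ M ∈ MaxBelow 𝓕 B, A ⊆ M := by
  classical
  set s := 𝓕.filter (fun C => A ⊆ C ∧ C ⊂ B) with hs
  have hAs : A ∈ s := by simp [hs, hA, hAB]
  obtain ⟨M, hMs, hMmax⟩ : ∃ m ∈ s, ∀ x ∈ s, ¬ m < x := by
    obtain ⟨m, hm⟩ := Finset.exists_maximal ⟨A, hAs⟩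
    exact ⟨m, hm.1, fun x hx hlt => hlt.not_ge (hm.2 hx hlt.le)⟩
  simp only [hs, Finset.mem_filter] at hMs
  refine ⟨M, ⟨hMs.1, hMs.2.2, fun C' hC' hMC' hC'B => ?_⟩, hMs.2.1⟩
  by_contra hne
  exact hMmax C' (by simp [hs, hC', hMs.2.1.trans hMC', hC'B])
    (lt_of_le_of_ne hMC' (Ne.symm hne))

lemma mem_of_compat {C : Finset V} (hC : IsConnSub G C)
    (h : ∀ A ∈ 𝓕, Compat G C A) : C ∈ 𝓕 := by
  have hnested : IsNested G (insert C 𝓕) := by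
    refine ⟨?_, ?_, Finset.mem_insert_of_mem h𝓕.1.2.2⟩
    · intro B hB
      rcases Finset.mem_insert.1 hB with rfl | hB
      · exact hC
      · exact h𝓕.1.1 B hB
    · intro B₁ hB₁ B₂ hB₂
      rcases Finset.mem_insert.1 hB₁ with h1 | h1 <;> rcases Finset.mem_insert.1 hB₂ with h2 | h2
      · rw [h1, h2]; exact Or.inl (Finset.Subset.refl _)
      · rw [h1]; exact h B₂ h2
      · rw [h2]; exact (h B₁ h1).symm
      · exact h𝓕.1.2.1 B₁ h1 B₂ h2
  have := h𝓕.2 _ hnested (Finset.subset_insert _ _)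
  rw [← this]
  exact Finset.mem_insert_self _ _

/-- Key lemma: for `B ∈ 𝓕` and `α ∈ B` uncovered by `MaxBelow 𝓕 B`, every connected
component of `B.erase α` is a maximal element of `𝓕` below `B`. -/
lemma comp_mem_maxBelow {B : Finset V} (hB : B ∈ 𝓕) {α : V} (hα : α ∈ B)
    (huncov : ∀ C ∈ MaxBelow 𝓕 B, α ∉ C) {v : V} (hv : v ∈ B.erase α) :
    compF G (B.erase α) v ∈ MaxBelow 𝓕 B := by
  set K := compF G (B.erase α) v with hK
  have hKconn : IsConnSub G K := compF_connSub hv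
  have hKsub : K ⊆ B.erase α := compF_subset
  have hKB : K ⊂ B := by
    refine Finset.ssubset_iff_of_subset (hKsub.trans (Finset.erase_subset _ _)) |>.2
      ⟨α, hα, fun hαK => ?_⟩
    exact (Finset.mem_erase.1 (hKsub hαK)).1 rfl
  -- maximal elements below B avoid α, hence lie in components of B.erase α
  have hMsub : ∀ M ∈ MaxBelow 𝓕 B, M ⊆ B.erase α := by
    intro M hM x hx
    exact Finset.mem_erase.2 ⟨fun hxα => huncov M hM (hxα ▸ hx), hM.2.1.1 hx⟩
  have hcompat : ∀ A ∈ 𝓕, Compat G K A := by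
    intro A hA
    rcases h𝓕.1.2.1 A hA B hB with hAB | hBA | horth
    · rcases eq_or_lt_of_le hAB with rfl | hAB
      · exact Or.inl (hKsub.trans (Finset.erase_subset _ _))
      · obtain ⟨M, hM, hAM⟩ := exists_maxBelow_superset h𝓕 hA hB hAB
        obtain ⟨a, ha⟩ := (h𝓕.1.1 M hM.1).1
        have hMK : M ⊆ compF G (B.erase α) a :=
          conn_subset_compF (hMsub M hM) (h𝓕.1.1 M hM.1) ha
        by_cases hcc : compF G (B.erase α) a = K
        · exact Or.inr (Or.inl (hAM.trans (hcc ▸ hMK)))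
        · refine Or.inr (Or.inr ?_)
          intro x hx y hy
          have := compF_orth (G := G) (fun h => hcc h.symm) x hx y (hMK (hAM hy))
          exact this
    · exact Or.inl ((hKsub.trans (Finset.erase_subset _ _)).trans hBA)
    · refine Or.inr (Or.inr fun x hx y hy => ?_)
      have := horth y hy x (hKsub hx |> Finset.mem_of_mem_erase)
      exact ⟨this.1.symm, fun hadj => this.2 hadj.symm⟩
  have hK𝓕 : K ∈ 𝓕 := mem_of_compat h𝓕 hKconn hcompat
  refine ⟨hK𝓕, hKB, fun C' hC' hKC' hC'B => ?_⟩
  obtain ⟨M, hM, hC'M⟩ := exists_maxBelow_superset h𝓕 hC' hB hC'B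
  have hvM : v ∈ M := hC'M (hKC' (self_mem_compF hv))
  have hMK : M ⊆ K := conn_subset_compF (hMsub M hM) (h𝓕.1.1 M hM.1) hvM
  exact Finset.Subset.antisymm ((hC'M.trans hMK)) hKC'

lemma exists_uncovered {B : Finset V} (hB : B ∈ 𝓕) :
    ∃ α ∈ B, ∀ C ∈ MaxBelow 𝓕 B, α ∉ C := by
  by_contra hcon
  push_neg at hcon
  obtain ⟨b0, hb0⟩ := (h𝓕.1.1 B hB).1
  obtain ⟨C0, hC0, hb0C0⟩ := hcon b0 hb0
  have hC0B : C0 = B := by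
    refine closed_eq (h𝓕.1.1 B hB) hC0.2.1.1 ⟨b0, hb0C0⟩ ?_
    intro a ha b hb hbC0 hadj
    obtain ⟨C1, hC1, hbC1⟩ := hcon b hb
    have hne : C0 ≠ C1 := fun h => hbC0 (h ▸ hbC1)
    exact (maxBelow_orth h𝓕 hC0 hC1 hne a ha b hbC1).2 hadj
  exact hC0.2.1.2 (hC0B ▸ Finset.Subset.refl B)


lemma alpha_spec {B : Finset V} (hB : B ∈ 𝓕) :
    ∃ α, α ∈ B ∧ (∀ C ∈ MaxBelow 𝓕 B, α ∉ C) ∧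
      (∀ v ∈ B, v ≠ α → ∃ C ∈ MaxBelow 𝓕 B, v ∈ C) := by
  obtain ⟨α, hαB, huncov⟩ := exists_uncovered h𝓕 hB
  refine ⟨α, hαB, huncov, fun v hv hvα => ?_⟩
  have hv' : v ∈ B.erase α := Finset.mem_erase.2 ⟨hvα, hv⟩
  exact ⟨compF G (B.erase α) v, comp_mem_maxBelow h𝓕 hB hαB huncov hv',
    self_mem_compF hv'⟩

lemma maxBelow_iff {B : Finset V} (hB : B ∈ 𝓕) {α : V} (hα : α ∈ B)
    (huncov : ∀ C ∈ MaxBelow 𝓕 B, α ∉ C) (C : Finset V) :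
    C ∈ MaxBelow 𝓕 B ↔
      (C ⊆ B.erase α ∧ IsConnSub G C ∧
        ∀ C' : Finset V, C ⊆ C' → C' ⊆ B.erase α → IsConnSub G C' → C' = C) := by
  constructor
  · intro hC
    have hCsub : C ⊆ B.erase α := fun x hx =>
      Finset.mem_erase.2 ⟨fun hxα => huncov C hC (hxα ▸ hx), hC.2.1.1 hx⟩
    have hCconn : IsConnSub G C := h𝓕.1.1 C hC.1
    obtain ⟨c, hc⟩ := hCconn.1
    have hc' : c ∈ B.erase α := hCsub hc
    have hKmb := comp_mem_maxBelow h𝓕 hB hα huncov hc'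
    have hCK : C ⊆ compF G (B.erase α) c := conn_subset_compF hCsub hCconn hc
    have hKC : compF G (B.erase α) c = C := hC.2.2 _ hKmb.1 hCK hKmb.2.1
    refine ⟨hCsub, hCconn, fun C' hCC' hC'sub hC'conn => ?_⟩
    have : C' ⊆ compF G (B.erase α) c := conn_subset_compF hC'sub hC'conn (hCC' hc)
    exact Finset.Subset.antisymm (hKC ▸ this) hCC'
  · rintro ⟨hCsub, hCconn, hmax⟩
    obtain ⟨c, hc⟩ := hCconn.1
    have hc' : c ∈ B.erase α := hCsub hc
    have hCK : C ⊆ compF G (B.erase α) c := conn_subset_compF hCsub hCconn hc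
    have hKC : compF G (B.erase α) c = C :=
      hmax _ hCK compF_subset (compF_connSub hc')
    exact hKC ▸ comp_mem_maxBelow h𝓕 hB hα huncov hc'

end Main


/-- For a maximal nested set `𝓕` on a connected diagram: (a) `𝓕` has exactly
`|D|` elements; (b) for each `B ∈ 𝓕` there is exactly one vertex `α ∈ B` not
covered by the maximal elements of `𝓕` properly contained in `B`, and these
maximal elements are precisely the connected components of `B \ {α}`. -/
theorem stmt3 (hG : G.Connected) (𝓕 : Finset (Finset V)) (h𝓕 : IsMaxNested G 𝓕) :
    𝓕.card = Fintype.card V ∧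
    ∀ B ∈ 𝓕, ∃! α, α ∈ B ∧
      ((∀ v ∈ B, v ≠ α → ∃ C ∈ MaxBelow 𝓕 B, v ∈ C) ∧
       (∀ C ∈ MaxBelow 𝓕 B, α ∉ C) ∧
       (∀ C : Finset V, C ∈ MaxBelow 𝓕 B ↔
         (C ⊆ B.erase α ∧ IsConnSub G C ∧
           ∀ C' : Finset V, C ⊆ C' → C' ⊆ B.erase α → IsConnSub G C' → C' = C))) := by
  classical
  constructor
  · -- cardinality
    choose f hf1 hf2 hf3 using fun B (hB : B ∈ 𝓕) => alpha_spec h𝓕 hB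
    rw [← Finset.card_univ]
    refine Finset.card_bij f (fun B hB => Finset.mem_univ _) ?_ ?_
    · -- injective
      have key : ∀ B₁ (h₁ : B₁ ∈ 𝓕), ∀ B₂ (h₂ : B₂ ∈ 𝓕), B₁ ⊂ B₂ →
          f B₁ h₁ ≠ f B₂ h₂ := by
        intro B₁ h₁ B₂ h₂ hss heq
        obtain ⟨M, hM, hBM⟩ := exists_maxBelow_superset h𝓕 h₁ h₂ hss
        exact hf2 B₂ h₂ M hM (heq ▸ hBM (hf1 B₁ h₁))
      intro B₁ h₁ B₂ h₂ heq
      by_contra hne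
      rcases h𝓕.1.2.1 B₁ h₁ B₂ h₂ with h | h | h
      · exact key B₁ h₁ B₂ h₂ (lt_of_le_of_ne h hne) heq
      · exact key B₂ h₂ B₁ h₁ (lt_of_le_of_ne h (Ne.symm hne)) heq.symm
      · exact (h _ (hf1 B₁ h₁) _ (heq ▸ hf1 B₂ h₂)).1 rfl
    · -- surjective
      intro v _
      set s := 𝓕.filter (fun C => v ∈ C) with hs
      have hsne : s.Nonempty := ⟨Finset.univ, by simp [hs, h𝓕.1.2.2]⟩
      obtain ⟨B, hBs, hBmin⟩ : ∃ m ∈ s, ∀ x ∈ s, ¬ x < m := by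
        obtain ⟨m, hm⟩ := Finset.exists_minimal hsne
        exact ⟨m, hm.1, fun x hx hlt => hlt.not_ge (hm.2 hx hlt.le)⟩
      simp only [hs, Finset.mem_filter] at hBs
      refine ⟨B, hBs.1, ?_⟩
      by_contra hne
      obtain ⟨C, hC, hvC⟩ := hf3 B hBs.1 v hBs.2 (Ne.symm hne)
      exact hBmin C (by simp [hs, hC.1, hvC]) hC.2.1
  · -- part (b)
    intro B hB
    obtain ⟨α, hαB, huncov, hcov⟩ := alpha_spec h𝓕 hB
    refine ⟨α, ⟨hαB, hcov, huncov, maxBelow_iff h𝓕 hB hαB huncov⟩, ?_⟩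
    rintro β ⟨hβB, hβcov, hβuncov, -⟩
    by_contra hne
    obtain ⟨C, hC, hαC⟩ := hβcov α hαB (fun h => hne h.symm)
    exact huncov C hC hαC

end Stmt3
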